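/- Let G be a groupoid and let c be a ℤ-valued cocycle on G, i.e. an assignment of an integer c(γ) to each arrow γ of G such that c(γγ') = c(γ) + c(γ') whenever γ and γ' are composable. If c is strongly surjective, meaning that for every object u of G and every integer n there is an arrow γ with range u and c(γ) = n, then c is unperforated: for every arrow γ with c(γ) = n > 0 there exist composable arrows γ₁, …, γₙ with c(γᵢ) = 1 for each i and γ = γ₁γ₂⋯γₙ. -/
import Mathlib


open CategoryTheory

/-- `FactorsAs c k n γ` says that the arrow `γ` of the groupoid `G` can be written as a
composite of `n` composable arrows, each of which is assigned the value `k` by `c`. -/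
def FactorsAs {G : Type*} [Groupoid G] (c : ∀ ⦃x y : G⦄, (x ⟶ y) → ℤ) (k : ℤ) :
    ℕ → ∀ ⦃x y : G⦄, (x ⟶ y) → Prop
  | 0 => fun {_ _} _ => False
  | 1 => fun {_ _} γ => c γ = k
  | (n + 2) => fun {x y} γ => ∃ (z : G) (f : x ⟶ z) (g : z ⟶ y),
      c f = k ∧ γ = f ≫ g ∧ FactorsAs c k (n + 1) g

/-- If a ℤ-valued cocycle `c` on a groupoid `G` is strongly surjective (for every object `u`
and every integer `n` there is an arrow with range `u` and cocycle value `n`), then `c` is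
unperforated: every arrow `γ` with `c γ = n > 0` is a composite of `n` composable arrows,
each of cocycle value `1`. -/
theorem strongly_surjective_cocycle_is_unperforated
    {G : Type*} [Groupoid G]
    (c : ∀ ⦃x y : G⦄, (x ⟶ y) → ℤ)
    (hcocycle : ∀ ⦃x y z : G⦄ (f : x ⟶ y) (g : y ⟶ z), c (f ≫ g) = c f + c g)
    (hsurj : ∀ (u : G) (n : ℤ), ∃ (x : G) (γ : x ⟶ u), c γ = n) :
    ∀ ⦃x y : G⦄ (γ : x ⟶ y) (n : ℕ), 0 < n → c γ = (n : ℤ) →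
      FactorsAs c 1 n γ := by
  have hid : ∀ x : G, c (𝟙 x) = 0 := by
    intro x
    have := hcocycle (𝟙 x) (𝟙 x)
    rw [Category.id_comp] at this
    omega
  have hinv : ∀ ⦃x y : G⦄ (f : x ⟶ y), c (Groupoid.inv f) = - c f := by
    intro x y f
    have := hcocycle f (Groupoid.inv f)
    rw [Groupoid.comp_inv, hid] at this
    omega
  intro x y γ n
  induction n using Nat.strong_induction_on generalizing x y γ with
  | _ n ih =>
    match n with
    | 0 => intro h; omega
    | 1 => intro _ h; simpa [FactorsAs] using h
    | (m + 2) =>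
      intro _ hc
      obtain ⟨z, δ, hδ⟩ := hsurj x (-1)
      refine ⟨z, Groupoid.inv δ, δ ≫ γ, by rw [hinv]; omega, by
        rw [← Category.assoc, Groupoid.inv_comp, Category.id_comp], ?_⟩
      apply ih (m + 1) (by omega) _ (by omega)
      rw [hcocycle]
      push_cast
      omega
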